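/- Let V be a finite-dimensional real vector space with a (possibly degenerate) skew-symmetric bilinear form σ, and suppose V = E ⊕ F where both E and F are isotropic subspaces (σ vanishes identically on E×E and on F×F), F ≠ 0, and F intersects the kernel of σ trivially (for every nonzero f ∈ F there exists u ∈ V with σ(f,u) ≠ 0). Let W be a linear subspace of End(V) such that every A ∈ W annihilates E and maps F into E, and such that W contains no nonzero element of rank ≤ 1. Then whenever a linear map φ : V → W and a vector v ∈ V satisfy φ(a)b − φ(b)a = σ(a,b)·v for all a,b ∈ V, one has v = 0 and φ(e) = 0 for all e ∈ E. (Consequently, the modified first prolongation of W coincides with its standard first prolongation.) -/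

import Mathlib

/-- Let `V = E ⊕ F` with `E`, `F` isotropic for a (possibly degenerate)
skew-symmetric form `σ`, `F ≠ 0`, `F` meeting the kernel of `σ` trivially.  Let
`W ⊆ End(V)` annihilate `E`, map `F` into `E`, and contain no nonzero element of rank ≤ 1.
Then any solution `(φ, v)` of the modified prolongation equation has `v = 0` and `φ|_E = 0`;
hence the modified first prolongation of `W` equals its standard first prolongation. -/
theorem stmt_5 (V : Type*) [AddCommGroup V] [Module ℝ V] [FiniteDimensional ℝ V]
    (σ : V →ₗ[ℝ] V →ₗ[ℝ] ℝ) (hskew : ∀ x y : V, σ x y = - σ y x)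
    (E F : Submodule ℝ V) (hcompl : IsCompl E F)
    (hE : ∀ x ∈ E, ∀ y ∈ E, σ x y = 0) (hF : ∀ x ∈ F, ∀ y ∈ F, σ x y = 0)
    (hFne : F ≠ ⊥)
    (hker : ∀ f ∈ F, f ≠ 0 → ∃ u : V, σ f u ≠ 0)
    (W : Submodule ℝ (V →ₗ[ℝ] V))
    (hWE : ∀ A ∈ W, ∀ e ∈ E, A e = 0)
    (hWF : ∀ A ∈ W, ∀ f ∈ F, A f ∈ E)
    (hrank : ∀ A ∈ W, Module.finrank ℝ (LinearMap.range A) ≤ 1 → A = 0)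
    (φ : V →ₗ[ℝ] (V →ₗ[ℝ] V)) (hφW : ∀ z : V, φ z ∈ W)
    (v : V) (hv : ∀ a b : V, φ a b - φ b a = σ a b • v) :
    v = 0 ∧ ∀ e ∈ E, φ e = 0 := by
  -- decomposition of any vector
  have hdec : ∀ x : V, ∃ e ∈ E, ∃ f ∈ F, x = e + f := by
    intro x
    obtain ⟨e, f, he, hf, hx⟩ := Submodule.codisjoint_iff_exists_add_eq.mp hcompl.codisjoint x
    exact ⟨e, he, f, hf, hx.symm⟩
  -- φ(e) f = σ e f • v for e ∈ E, f arbitrary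
  have key : ∀ e ∈ E, ∀ x : V, φ e x = σ e x • v := by
    intro e he x
    have := hv e x
    rwa [hWE _ (hφW x) e he, sub_zero] at this
  -- φ(e) = 0 for e ∈ E
  have hφE : ∀ e ∈ E, φ e = 0 := by
    intro e he
    apply hrank _ (hφW e)
    have hle : LinearMap.range (φ e) ≤ Submodule.span ℝ {v} := by
      rintro _ ⟨x, rfl⟩
      rw [key e he x]
      exact Submodule.smul_mem _ _ (Submodule.mem_span_singleton_self v)
    calc Module.finrank ℝ (LinearMap.range (φ e))
        ≤ Module.finrank ℝ (Submodule.span ℝ ({v} : Set V)) :=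
          Submodule.finrank_mono hle
      _ ≤ 1 := by
          by_cases hv0 : v = 0
          · rw [hv0, Submodule.span_zero_singleton]; simp
          · rw [finrank_span_singleton hv0]
  refine ⟨?_, hφE⟩
  -- get nonzero f ∈ F
  obtain ⟨f, hfF, hf0⟩ := Submodule.exists_mem_ne_zero_of_ne_bot hFne
  obtain ⟨u, hu⟩ := hker f hfF hf0
  obtain ⟨e, he, f', hf', rfl⟩ := hdec u
  have hσef : σ f e ≠ 0 := by
    intro h
    apply hu
    rw [map_add, h, hF f hfF f' hf', add_zero]
  have hσ : σ e f ≠ 0 := by rw [hskew e f]; simpa using hσef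
  have := key e he f
  rw [hφE e he] at this
  simp only [LinearMap.zero_apply] at this
  rcases smul_eq_zero.mp this.symm with h | h
  · exact absurd h hσ
  · exact h
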